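/- arXiv:1211.0255 — 2 statements merged into one kernel-verified Lean document; each statement's English description precedes it below -/
import Mathlib

section
/- For the family f_s(z) = λz − (λ/2)(s + 1/s)z² + (λ/3)z³ with λ ∈ ℂ∖{0}, the n-th iterate evaluated at the critical point s satisfies: f_s^n(s) is a polynomial in s of degree 3^n with leading coefficient (λ/3)^{(3^{n-1}−1)/2} · (−λ/6)^{3^{n-1}} for all n ≥ 1. -/
open Polynomial

private lemma exp_step (n : ℕ) (hn : 1 ≤ n) :
    (3 ^ n - 1) / 2 = 1 + 3 * ((3 ^ (n - 1) - 1) / 2) := by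
  obtain ⟨k, rfl⟩ : ∃ k, n = k + 1 := ⟨n - 1, by omega⟩
  obtain ⟨m, hm⟩ : Odd (3 ^ k) := Odd.pow ⟨1, by norm_num⟩
  have h2 : 3 ^ (k + 1) = 3 * 3 ^ k := by rw [pow_succ]; ring
  simp only [Nat.add_sub_cancel]
  omega

private lemma pow_eq (n : ℕ) (hn : 1 ≤ n) : 3 ^ n = 3 * 3 ^ (n - 1) := by
  obtain ⟨k, rfl⟩ : ∃ k, n = k + 1 := ⟨n - 1, by omega⟩
  simp [pow_succ]; ring

private lemma key (lam : ℂ) (hlam : lam ≠ 0) :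
    ∀ n : ℕ, 1 ≤ n → ∃ p q : ℂ[X], p = X * q ∧ p.natDegree = 3 ^ n ∧
      p.leadingCoeff = (lam / 3) ^ ((3 ^ (n - 1) - 1) / 2) * (-lam / 6) ^ (3 ^ (n - 1)) ∧
      ∀ s : ℂ, s ≠ 0 →
        (fun z => lam * z - lam / 2 * (s + 1 / s) * z ^ 2 + lam / 3 * z ^ 3)^[n] s = p.eval s := by
  intro n hn
  induction n, hn using Nat.le_induction with
  | base =>
      refine ⟨C (lam/2) * X + C (-(lam/6)) * X ^ 3, C (lam/2) + C (-(lam/6)) * X ^ 2,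
        by ring, ?_, ?_, ?_⟩
      · have : lam / 6 ≠ 0 := div_ne_zero hlam (by norm_num)
        compute_degree!
      · have hd : (C (lam/2) * X + C (-(lam/6)) * X ^ 3).natDegree = 3 := by
          have : lam / 6 ≠ 0 := div_ne_zero hlam (by norm_num)
          compute_degree!
        rw [leadingCoeff, hd]
        simp [coeff_X, coeff_X_pow]
        ring
      · intro s hs
        simp only [Function.iterate_one]
        simp only [eval_add, eval_mul, eval_C, eval_pow, eval_X]
        field_simp
        ring
  | succ n hn ih =>
      obtain ⟨p, q, hpq, hdeg, hlead, heval⟩ := ih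
      have h3 : (3:ℂ) ≠ 0 := by norm_num
      have hl3 : lam / 3 ≠ 0 := div_ne_zero hlam h3
      have hcne : p.leadingCoeff ≠ 0 := by
        rw [hlead]
        exact mul_ne_zero (pow_ne_zero _ hl3)
          (pow_ne_zero _ (div_ne_zero (neg_ne_zero.mpr hlam) (by norm_num)))
      have hpne : p ≠ 0 := leadingCoeff_ne_zero.mp hcne
      have hqne : q ≠ 0 := by rintro rfl; simp [hpq] at hpne
      have hqdeg : q.natDegree = 3 ^ n - 1 := by
        have := hdeg
        rw [hpq, natDegree_mul X_ne_zero hqne, natDegree_X] at this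
        omega
      set A : ℂ[X] := C (lam/3) * p ^ 3 with hA
      set B : ℂ[X] := C lam * p + (- (C (lam/2) * (X ^ 3 * q ^ 2 + X * q ^ 2))) with hB
      have h3n : (1:ℕ) ≤ 3 ^ n := Nat.one_le_pow _ _ (by norm_num)
      have hAdeg : A.natDegree = 3 ^ (n+1) := by
        rw [hA, natDegree_C_mul hl3, natDegree_pow, hdeg, pow_succ]
        ring
      have hAlead : A.leadingCoeff = (lam/3) * p.leadingCoeff ^ 3 := by
        rw [hA, leadingCoeff_mul, leadingCoeff_pow, leadingCoeff_C]
      have hBdeg : B.natDegree < 3 ^ (n+1) := by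
        have h1 : (C lam * p).natDegree ≤ 3 ^ n := by
          simpa [hdeg] using natDegree_C_mul_le lam p
        have h2 : (X ^ 3 * q ^ 2 : ℂ[X]).natDegree ≤ 3 + 2 * (3 ^ n - 1) := by
          calc (X ^ 3 * q ^ 2 : ℂ[X]).natDegree ≤ (X ^ 3:ℂ[X]).natDegree + (q^2).natDegree :=
                natDegree_mul_le
            _ ≤ 3 + 2 * (3 ^ n - 1) := by
                simp [natDegree_pow, hqdeg, natDegree_X_pow]
        have h3' : (X * q ^ 2 : ℂ[X]).natDegree ≤ 1 + 2 * (3 ^ n - 1) := by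
          calc (X * q ^ 2 : ℂ[X]).natDegree ≤ (X:ℂ[X]).natDegree + (q^2).natDegree :=
                natDegree_mul_le
            _ ≤ 1 + 2 * (3 ^ n - 1) := by simp [natDegree_pow, hqdeg]
        have h4 : (C (lam/2) * (X ^ 3 * q ^ 2 + X * q ^ 2)).natDegree ≤ 3 + 2 * (3 ^ n - 1) := by
          refine le_trans (natDegree_C_mul_le _ _) ?_
          exact le_trans (natDegree_add_le _ _) (by omega)
        have h5 : B.natDegree ≤ max (3 ^ n) (3 + 2 * (3 ^ n - 1)) := by
          refine le_trans (natDegree_add_le _ _) ?_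
          simp only [natDegree_neg]
          exact max_le_max h1 h4
        have h6 : 3 ^ n < 3 ^ (n+1) := Nat.pow_lt_pow_right (by norm_num) (by omega)
        have h7 : 3 + 2 * (3 ^ n - 1) < 3 ^ (n+1) := by
          have : 2 ≤ 3 ^ n := by
            calc 2 ≤ 3 ^ 1 := by norm_num
            _ ≤ 3 ^ n := Nat.pow_le_pow_right (by norm_num) hn
          rw [pow_succ]
          omega
        exact lt_of_le_of_lt h5 (max_lt h6 h7)
      have hdegBA : B.degree < A.degree := degree_lt_degree (hAdeg ▸ hBdeg)
      refine ⟨A + B, C (lam/3) * (X ^ 2 * q ^ 3) + (C lam * q + (- (C (lam/2) * (X ^ 2 * q ^ 2 + q ^ 2)))), ?_, ?_, ?_, ?_⟩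
      · rw [hA, hB, hpq]; ring
      · rw [natDegree_add_eq_left_of_degree_lt hdegBA, hAdeg]
      · rw [leadingCoeff_add_of_degree_lt' hdegBA, hAlead, hlead]
        have e1 : (3 ^ ((n+1) - 1) - 1) / 2 = 1 + 3 * ((3 ^ (n - 1) - 1) / 2) := by
          simpa using exp_step n hn
        have e2 : 3 ^ ((n+1) - 1) = 3 * 3 ^ (n - 1) := by
          simpa using pow_eq n hn
        rw [e1, e2]
        ring
      · intro s hs
        rw [Function.iterate_succ_apply']
        rw [heval s hs]
        simp only [eval_add, eval_mul, eval_neg, eval_C, eval_pow, eval_X, hpq, hA, hB]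
        field_simp
        ring

/-- For `f_s(z) = λz − (λ/2)(s + 1/s)z² + (λ/3)z³` with `λ ≠ 0`, the `n`-th
iterate at the critical point `s` is (for `s ≠ 0`) given by a polynomial in `s` of degree
`3^n` whose leading coefficient is `(λ/3)^{(3^{n-1}−1)/2} · (−λ/6)^{3^{n-1}}`, for all `n ≥ 1`. -/
theorem stmt_1 (lam : ℂ) (hlam : lam ≠ 0) (n : ℕ) (hn : 1 ≤ n) :
    ∃ p : Polynomial ℂ,
      p.natDegree = 3 ^ n ∧
      p.leadingCoeff = (lam / 3) ^ ((3 ^ (n - 1) - 1) / 2) * (-lam / 6) ^ (3 ^ (n - 1)) ∧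
      ∀ s : ℂ, s ≠ 0 →
        (fun z => lam * z - lam / 2 * (s + 1 / s) * z ^ 2 + lam / 3 * z ^ 3)^[n] s
          = p.eval s := by
  obtain ⟨p, q, _, hdeg, hlead, heval⟩ := key lam hlam n hn
  exact ⟨p, hdeg, hlead, heval⟩
end

section
/- Let f_t(z) = z^d + b_2(t)z^{d-2} + ... + b_d(t) with b_j ∈ ℂ[t], and a(t) ∈ ℂ[t]. Define G(t) = lim_{n→∞} d^{-n} log⁺|f_t^n(a(t))|. If deg_t f_t^n(a(t)) = m·d^n for all n ≥ 0 (with m ≥ 1), then G(t) = m·log|t| + O(1) as t → ∞, and the set M_a = {t ∈ ℂ : sup_n |f_t^n(a(t))| < ∞} is compact. -/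
open Polynomial Filter

noncomputable def Complex.abs : AbsoluteValue ℂ ℝ :=
  IsAbsoluteValue.toAbsoluteValue (norm : ℂ → ℝ)

lemma Complex.continuous_abs : Continuous Complex.abs := continuous_norm

noncomputable def pnorm (P : Polynomial ℂ) : ℝ :=
  ∑ j ∈ Finset.range (P.natDegree + 1), Complex.abs (P.coeff j)

lemma pnorm_nonneg (P : Polynomial ℂ) : 0 ≤ pnorm P :=
  Finset.sum_nonneg fun _ _ => AbsoluteValue.nonneg _ _

lemma abs_eval_le (P : Polynomial ℂ) (t : ℂ) (ht : 1 ≤ Complex.abs t) :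
    Complex.abs (P.eval t) ≤ pnorm P * Complex.abs t ^ P.natDegree := by
  rw [Polynomial.eval_eq_sum_range]
  calc Complex.abs (∑ i ∈ Finset.range (P.natDegree+1), P.coeff i * t ^ i)
      ≤ ∑ i ∈ Finset.range (P.natDegree+1), Complex.abs (P.coeff i * t ^ i) :=
        AbsoluteValue.sum_le _ _ _
    _ ≤ ∑ i ∈ Finset.range (P.natDegree+1), Complex.abs (P.coeff i) * Complex.abs t ^ P.natDegree := by
        refine Finset.sum_le_sum fun i hi => ?_
        rw [map_mul, map_pow]
        exact mul_le_mul_of_nonneg_left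
          (pow_le_pow_right₀ ht (Nat.lt_succ_iff.mp (Finset.mem_range.mp hi)))
          (AbsoluteValue.nonneg _ _)
    _ = pnorm P * Complex.abs t ^ P.natDegree := by rw [pnorm, Finset.sum_mul]

lemma abs_eval_ge (P : Polynomial ℂ) (hP : 1 ≤ P.natDegree) (t : ℂ) (ht1 : 1 ≤ Complex.abs t)
    (ht2 : 2 * pnorm P ≤ Complex.abs P.leadingCoeff * Complex.abs t) :
    Complex.abs P.leadingCoeff / 2 * Complex.abs t ^ P.natDegree ≤ Complex.abs (P.eval t) := by
  set D := P.natDegree with hD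
  have h0 : P.eval t = (∑ i ∈ Finset.range D, P.coeff i * t ^ i) + P.leadingCoeff * t ^ D := by
    rw [Polynomial.eval_eq_sum_range, Finset.sum_range_succ]; rfl
  set s := ∑ i ∈ Finset.range D, P.coeff i * t ^ i with hs
  have hkey : Complex.abs (P.leadingCoeff * t ^ D) - Complex.abs s ≤ Complex.abs (P.eval t) := by
    have h1 := Complex.abs.add_le (P.eval t) (-s)
    rw [h0] at h1 ⊢
    simp only [map_neg_eq_map] at h1
    have : s + P.leadingCoeff * t ^ D + -s = P.leadingCoeff * t ^ D := by ring
    rw [this] at h1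
    linarith
  have hsle : Complex.abs s ≤ pnorm P * Complex.abs t ^ (D - 1) := by
    calc Complex.abs s ≤ ∑ i ∈ Finset.range D, Complex.abs (P.coeff i * t ^ i) :=
          AbsoluteValue.sum_le _ _ _
      _ ≤ ∑ i ∈ Finset.range D, Complex.abs (P.coeff i) * Complex.abs t ^ (D-1) := by
          refine Finset.sum_le_sum fun i hi => ?_
          rw [map_mul, map_pow]
          exact mul_le_mul_of_nonneg_left
            (pow_le_pow_right₀ ht1 (Nat.le_sub_one_of_lt (Finset.mem_range.mp hi)))
            (AbsoluteValue.nonneg _ _)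
      _ ≤ pnorm P * Complex.abs t ^ (D-1) := by
          have hsum : (∑ i ∈ Finset.range D, Complex.abs (P.coeff i)) ≤ pnorm P := by
            rw [pnorm]
            exact Finset.sum_le_sum_of_subset_of_nonneg
              (Finset.range_subset_range.mpr (Nat.le_succ D)) (fun _ _ _ => AbsoluteValue.nonneg _ _)
          rw [← Finset.sum_mul]
          exact mul_le_mul_of_nonneg_right hsum (by positivity)
  have hpow : Complex.abs t ^ D = Complex.abs t * Complex.abs t ^ (D - 1) := by
    conv_lhs => rw [show D = (D-1) + 1 from (Nat.succ_pred_eq_of_pos hP).symm]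
    rw [pow_succ]; ring
  have habs : Complex.abs (P.leadingCoeff * t ^ D) = Complex.abs P.leadingCoeff * Complex.abs t ^ D := by
    rw [map_mul, map_pow]
  have htpos : (0:ℝ) ≤ Complex.abs t ^ (D-1) := by positivity
  have : pnorm P * Complex.abs t ^ (D-1) ≤ Complex.abs P.leadingCoeff / 2 * Complex.abs t ^ D := by
    rw [hpow]
    calc pnorm P * Complex.abs t ^ (D-1)
        ≤ (Complex.abs P.leadingCoeff * Complex.abs t / 2) * Complex.abs t ^ (D-1) := by
          apply mul_le_mul_of_nonneg_right _ htpos; linarith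
      _ = Complex.abs P.leadingCoeff / 2 * (Complex.abs t * Complex.abs t ^ (D-1)) := by ring
  linarith [habs ▸ hkey]

lemma eval_eval_comm (f : Polynomial (Polynomial ℂ)) (p : Polynomial ℂ) (t : ℂ) :
    (Polynomial.eval p f).eval t = (f.map (evalRingHom t)).eval (p.eval t) := by
  rw [Polynomial.eval_map]
  induction f using Polynomial.induction_on' with
  | add q r hq hr => simp [hq, hr]
  | monomial n b => simp [Polynomial.eval_monomial, Polynomial.eval₂_monomial]

lemma doubling (d : ℕ) (hd : 2 ≤ d) (g : Polynomial ℂ) (hg : g.Monic) (hdg : g.natDegree = d)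
    (z : ℂ) (B : ℝ) (hB : ∑ j ∈ Finset.range d, Complex.abs (g.coeff j) ≤ B)
    (hz : max 4 (2*(1+B)) ≤ Complex.abs z) :
    Complex.abs z ^ d / 2 ≤ Complex.abs (g.eval z) ∧
      Complex.abs (g.eval z) ≤ 2 * Complex.abs z ^ d := by
  have hz4 : (4:ℝ) ≤ Complex.abs z := le_trans (le_max_left _ _) hz
  have hz1 : (1:ℝ) ≤ Complex.abs z := by linarith
  have hzB : 2*(1+B) ≤ Complex.abs z := le_trans (le_max_right _ _) hz
  have hB0 : 0 ≤ B := le_trans (Finset.sum_nonneg fun _ _ => AbsoluteValue.nonneg _ _) hB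
  have h0 : g.eval z = (∑ i ∈ Finset.range d, g.coeff i * z ^ i) + z ^ d := by
    have : g.coeff d = 1 := by
      have := hg.coeff_natDegree; rwa [hdg] at this
    rw [Polynomial.eval_eq_sum_range, hdg, Finset.sum_range_succ, this, one_mul]
  set s := ∑ i ∈ Finset.range d, g.coeff i * z ^ i with hs
  have hd1 : 1 ≤ d := le_trans (by norm_num) hd
  have hsle : Complex.abs s ≤ Complex.abs z ^ d / 2 := by
    have hstep : Complex.abs s ≤ B * Complex.abs z ^ (d-1) := by
      calc Complex.abs s ≤ ∑ i ∈ Finset.range d, Complex.abs (g.coeff i * z ^ i) :=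
            AbsoluteValue.sum_le _ _ _
        _ ≤ ∑ i ∈ Finset.range d, Complex.abs (g.coeff i) * Complex.abs z ^ (d-1) := by
            refine Finset.sum_le_sum fun i hi => ?_
            rw [map_mul, map_pow]
            exact mul_le_mul_of_nonneg_left
              (pow_le_pow_right₀ hz1 (Nat.le_sub_one_of_lt (Finset.mem_range.mp hi)))
              (AbsoluteValue.nonneg _ _)
        _ ≤ B * Complex.abs z ^ (d-1) := by
            rw [← Finset.sum_mul]
            exact mul_le_mul_of_nonneg_right hB (by positivity)
    have hpow : Complex.abs z ^ d = Complex.abs z * Complex.abs z ^ (d - 1) := by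
      conv_lhs => rw [show d = (d-1) + 1 from (Nat.succ_pred_eq_of_pos hd1).symm]
      rw [pow_succ]; ring
    have htpos : (0:ℝ) ≤ Complex.abs z ^ (d-1) := by positivity
    rw [hpow]
    calc Complex.abs s ≤ B * Complex.abs z ^ (d-1) := hstep
      _ ≤ (Complex.abs z / 2) * Complex.abs z ^ (d-1) := by
          apply mul_le_mul_of_nonneg_right _ htpos; linarith
      _ = Complex.abs z * Complex.abs z ^ (d-1) / 2 := by ring
  have habsz : Complex.abs (z ^ d) = Complex.abs z ^ d := map_pow _ _ _
  constructor
  · have h1 := Complex.abs.add_le (g.eval z) (-s)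
    rw [h0] at h1 ⊢
    simp only [map_neg_eq_map] at h1
    have he : s + z ^ d + -s = z ^ d := by ring
    rw [he, habsz] at h1
    linarith
  · rw [h0]
    have h1 := Complex.abs.add_le s (z ^ d)
    rw [habsz] at h1
    have h2 : (0:ℝ) ≤ Complex.abs z ^ d := by positivity
    linarith

lemma orbit_grow (d : ℕ) (hd : 2 ≤ d) (f : Polynomial (Polynomial ℂ)) (hmonic : f.Monic)
    (hdeg : f.natDegree = d) (a : Polynomial ℂ) (t : ℂ) (N : ℕ)
    (hbase : max 4 (2*(1 + ∑ j ∈ Finset.range d, Complex.abs ((f.coeff j).eval t))) ≤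
      Complex.abs (((fun p => Polynomial.eval p f)^[N] a).eval t)) :
    ∀ k : ℕ,
      (max 4 (2*(1 + ∑ j ∈ Finset.range d, Complex.abs ((f.coeff j).eval t))) ≤
        Complex.abs (((fun p => Polynomial.eval p f)^[N+k] a).eval t)) ∧
      4 * 2^k ≤ Complex.abs (((fun p => Polynomial.eval p f)^[N+k] a).eval t) ∧
      (Complex.abs (((fun p => Polynomial.eval p f)^[N+k] a).eval t))^d / 2 ≤
        Complex.abs (((fun p => Polynomial.eval p f)^[N+k+1] a).eval t) ∧
      Complex.abs (((fun p => Polynomial.eval p f)^[N+k+1] a).eval t) ≤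
        2 * (Complex.abs (((fun p => Polynomial.eval p f)^[N+k] a).eval t))^d := by
  set F := fun p => Polynomial.eval p f with hF
  set Bt := ∑ j ∈ Finset.range d, Complex.abs ((f.coeff j).eval t) with hBt
  set g : Polynomial ℂ := f.map (evalRingHom t) with hg
  have hgmonic : g.Monic := hmonic.map _
  have hgdeg : g.natDegree = d := by rw [hg, hmonic.natDegree_map, hdeg]
  have hgB : ∑ j ∈ Finset.range d, Complex.abs (g.coeff j) ≤ Bt := by
    rw [hBt]
    apply le_of_eq
    refine Finset.sum_congr rfl fun j _ => ?_
    rw [hg, Polynomial.coeff_map, coe_evalRingHom]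
  have hsucc : ∀ n : ℕ, (F^[n+1] a).eval t = g.eval ((F^[n] a).eval t) := by
    intro n
    rw [Function.iterate_succ_apply', hF]
    exact eval_eval_comm f _ t
  -- main induction
  intro k
  induction k with
  | zero =>
    refine ⟨by simpa using hbase, by simpa using le_trans (le_max_left _ _) hbase, ?_, ?_⟩
    · rw [hsucc]
      exact (doubling d hd g hgmonic hgdeg _ Bt hgB (by simpa using hbase)).1
    · rw [hsucc]
      exact (doubling d hd g hgmonic hgdeg _ Bt hgB (by simpa using hbase)).2
  | succ k ih =>
    obtain ⟨ih1, ih2, ih3, ih4⟩ := ih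
    set u := Complex.abs ((F^[N+k] a).eval t) with hu
    set v := Complex.abs ((F^[N+k+1] a).eval t) with hv
    have hu4 : (4:ℝ) ≤ u := le_trans (le_max_left _ _) ih1
    have hu1 : (1:ℝ) ≤ u := by linarith
    have hud : u ^ 2 ≤ u ^ d := pow_le_pow_right₀ hu1 hd
    have hgrow : 2 * u ≤ v := by
      have : u ^ 2 / 2 ≤ v := le_trans (by apply div_le_div_of_nonneg_right hud; norm_num) ih3
      nlinarith
    have hv1 : max 4 (2*(1+Bt)) ≤ v := by
      calc max 4 (2*(1+Bt)) ≤ u := ih1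
        _ ≤ 2 * u := by linarith
        _ ≤ v := hgrow
    have heq : N + (k+1) = (N + k) + 1 := by ring
    refine ⟨by rw [heq]; exact hv1, ?_, ?_, ?_⟩
    · rw [heq]
      calc (4:ℝ) * 2^(k+1) = 2 * (4 * 2^k) := by ring
        _ ≤ 2 * u := by linarith
        _ ≤ v := hgrow
    · rw [show N + (k+1) + 1 = ((N+k)+1)+1 from by ring, hsucc ((N+k)+1), heq]
      exact (doubling d hd g hgmonic hgdeg _ Bt hgB hv1).1
    · rw [show N + (k+1) + 1 = ((N+k)+1)+1 from by ring, hsucc ((N+k)+1), heq]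
      exact (doubling d hd g hgmonic hgdeg _ Bt hgB hv1).2

set_option maxHeartbeats 1000000 in
/-- For a monic centered family `f_t(z) = z^d + b₂(t)z^{d-2} + ⋯ + b_d(t)`
with polynomial coefficients and a marked point `a(t) ∈ ℂ[t]` whose iterates satisfy
`deg_t f_t^n(a(t)) = m·d^n` for all `n ≥ 0` (`m ≥ 1`), the escape rate
`G(t) = lim_n d^{-n} log⁺|f_t^n(a(t))|` satisfies `G(t) = m·log|t| + O(1)` as `t → ∞`,
and the boundedness locus `M_a = {t : sup_n |f_t^n(a(t))| < ∞}` is compact. -/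
theorem stmt_17 (d : ℕ) (hd : 2 ≤ d) (f : Polynomial (Polynomial ℂ))
    (hmonic : f.Monic) (hdeg : f.natDegree = d) (hcentered : f.coeff (d - 1) = 0)
    (a : Polynomial ℂ) (m : ℕ) (hm : 1 ≤ m)
    (horb : ∀ n : ℕ, ((fun p => Polynomial.eval p f)^[n] a).natDegree = m * d ^ n)
    (G : ℂ → ℝ)
    (hG : ∀ t : ℂ, Tendsto
      (fun n : ℕ => (1 / (d : ℝ) ^ n) *
        Real.log (max 1 ‖((fun p => Polynomial.eval p f)^[n] a).eval t‖))
      atTop (nhds (G t))) :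
    (∃ C R : ℝ, ∀ t : ℂ, R ≤ ‖t‖ →
        |G t - (m : ℝ) * Real.log ‖t‖| ≤ C) ∧
    IsCompact {t : ℂ | ∃ B : ℝ, ∀ n : ℕ,
        ‖((fun p => Polynomial.eval p f)^[n] a).eval t‖ ≤ B} := by
  change ∀ t : ℂ, Tendsto
      (fun n : ℕ => (1 / (d : ℝ) ^ n) *
        Real.log (max 1 (Complex.abs (((fun p => Polynomial.eval p f)^[n] a).eval t))))
      atTop (nhds (G t)) at hG
  show (∃ C R : ℝ, ∀ t : ℂ, R ≤ Complex.abs t →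
        |G t - (m : ℝ) * Real.log (Complex.abs t)| ≤ C) ∧
    IsCompact {t : ℂ | ∃ B : ℝ, ∀ n : ℕ,
        Complex.abs (((fun p => Polynomial.eval p f)^[n] a).eval t) ≤ B}
  have hdR : (2:ℝ) ≤ (d:ℝ) := by exact_mod_cast hd
  set F := fun p => Polynomial.eval p f with hF
  set Bt : ℂ → ℝ := fun t => ∑ j ∈ Finset.range d, Complex.abs ((f.coeff j).eval t) with hBt
  set R₁ : ℂ → ℝ := fun t => max 4 (2*(1 + Bt t)) with hR₁
  set S : ℝ := ∑ j ∈ Finset.range d, pnorm (f.coeff j) with hS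
  have hS0 : 0 ≤ S := Finset.sum_nonneg fun j _ => pnorm_nonneg _
  set Dm : ℕ := (Finset.range d).sup (fun j => (f.coeff j).natDegree) with hDm
  have hR1le : ∀ t : ℂ, 1 ≤ Complex.abs t → R₁ t ≤ (6 + 2*S) * Complex.abs t ^ Dm := by
    intro t ht
    have htDm : (1:ℝ) ≤ Complex.abs t ^ Dm := one_le_pow₀ ht
    have hBtle : Bt t ≤ S * Complex.abs t ^ Dm := by
      rw [hBt, hS, Finset.sum_mul]
      refine Finset.sum_le_sum fun j hj => ?_
      calc Complex.abs ((f.coeff j).eval t)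
          ≤ pnorm (f.coeff j) * Complex.abs t ^ (f.coeff j).natDegree := abs_eval_le _ t ht
        _ ≤ pnorm (f.coeff j) * Complex.abs t ^ Dm := by
            have hjd : (f.coeff j).natDegree ≤ Dm := by
              rw [hDm]; exact Finset.le_sup (f := fun j => (Polynomial.coeff f j).natDegree) hj
            exact mul_le_mul_of_nonneg_left (pow_le_pow_right₀ ht hjd) (pnorm_nonneg _)
    have hSt : 0 ≤ S * Complex.abs t ^ Dm := by positivity
    rw [hR₁]
    apply max_le
    · nlinarith
    · nlinarith
  -- choice of n₀
  set n₀ : ℕ := Dm + 1 with hn₀def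
  have hn₀ : Dm + 1 ≤ m * d ^ n₀ := by
    have h1 : n₀ < 2 ^ n₀ := Nat.lt_two_pow_self
    have h2 : 2 ^ n₀ ≤ d ^ n₀ := Nat.pow_le_pow_left hd n₀
    have h3 : d ^ n₀ ≤ m * d ^ n₀ := Nat.le_mul_of_pos_left _ hm
    omega
  set P : Polynomial ℂ := F^[n₀] a with hP
  set D' : ℕ := m * d ^ n₀ with hD'
  have hPdeg : P.natDegree = D' := horb n₀
  have hD'pos : 1 ≤ D' := Nat.one_le_iff_ne_zero.mpr (by positivity)
  have hPne : P ≠ 0 := by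
    intro h
    rw [h, Polynomial.natDegree_zero] at hPdeg
    omega
  set c : ℝ := Complex.abs P.leadingCoeff with hc
  have hc0 : 0 < c := by
    rw [hc]
    exact (AbsoluteValue.pos _ (Polynomial.leadingCoeff_ne_zero.mpr hPne))
  have hcpn : c ≤ pnorm P := by
    rw [hc, pnorm]
    exact Finset.single_le_sum (f := fun j => Complex.abs (P.coeff j))
      (fun j _ => AbsoluteValue.nonneg _ _) (Finset.self_mem_range_succ _)
  have hpn0 : 0 < pnorm P := lt_of_lt_of_le hc0 hcpn
  set R : ℝ := max 1 (max (2 * pnorm P / c) (2*(6+2*S)/c)) with hR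
  -- base estimates at level n₀ for |t| ≥ R
  have hbase : ∀ t : ℂ, R ≤ Complex.abs t →
      c/2 * Complex.abs t ^ D' ≤ Complex.abs (P.eval t) ∧
      Complex.abs (P.eval t) ≤ pnorm P * Complex.abs t ^ D' ∧
      R₁ t ≤ c/2 * Complex.abs t ^ D' := by
    intro t ht
    have ht1 : (1:ℝ) ≤ Complex.abs t := le_trans (le_max_left _ _) ht
    have ht0 : (0:ℝ) < Complex.abs t := by linarith
    have htA : 2 * pnorm P / c ≤ Complex.abs t :=
      le_trans (le_trans (le_max_left _ _) (le_max_right _ _)) ht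
    have htB : 2*(6+2*S)/c ≤ Complex.abs t :=
      le_trans (le_trans (le_max_right _ _) (le_max_right _ _)) ht
    have htA' : 2 * pnorm P ≤ c * Complex.abs t := by
      rw [div_le_iff₀ hc0] at htA; linarith [htA]
    have htB' : 2*(6+2*S) ≤ c * Complex.abs t := by
      rw [div_le_iff₀ hc0] at htB; linarith [htB]
    have hge : c/2 * Complex.abs t ^ D' ≤ Complex.abs (P.eval t) := by
      have := abs_eval_ge P (hPdeg ▸ hD'pos) t ht1 htA'
      rwa [hPdeg] at this
    have hle : Complex.abs (P.eval t) ≤ pnorm P * Complex.abs t ^ D' := by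
      have := abs_eval_le P t ht1
      rwa [hPdeg] at this
    refine ⟨hge, hle, ?_⟩
    calc R₁ t ≤ (6 + 2*S) * Complex.abs t ^ Dm := hR1le t ht1
      _ ≤ (c * Complex.abs t / 2) * Complex.abs t ^ Dm := by
          apply mul_le_mul_of_nonneg_right _ (by positivity); linarith
      _ = c/2 * Complex.abs t ^ (Dm + 1) := by rw [pow_succ]; ring
      _ ≤ c/2 * Complex.abs t ^ D' := by
          apply mul_le_mul_of_nonneg_left _ (by positivity)
          exact pow_le_pow_right₀ ht1 hn₀
  constructor
  · -- PART 1
    refine ⟨Real.log 2 + (|Real.log (c/2)| + |Real.log (pnorm P)|), R, fun t ht => ?_⟩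
    have ht1 : (1:ℝ) ≤ Complex.abs t := le_trans (le_max_left _ _) ht
    have ht0 : (0:ℝ) < Complex.abs t := by linarith
    obtain ⟨hge, hle, hbig⟩ := hbase t ht
    have hbase' : max 4 (2*(1 + Bt t)) ≤ Complex.abs ((F^[n₀] a).eval t) := le_trans hbig hge
    have horb' := orbit_grow d hd f hmonic hdeg a t n₀ hbase'
    set u : ℕ → ℝ := fun k => Complex.abs ((F^[n₀+k] a).eval t) with hu
    have hu4 : ∀ k, (4:ℝ) ≤ u k := by
      intro k
      have h1 := (horb' k).2.1
      have h5 : (1:ℝ) ≤ 2^k := one_le_pow₀ one_le_two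
      have : (4:ℝ) ≤ 4 * 2^k := by nlinarith
      exact le_trans this h1
    have hupos : ∀ k, (0:ℝ) < u k := fun k => lt_of_lt_of_le (by norm_num) (hu4 k)
    have key : ∀ k : ℕ, |Real.log (u (k+1)) - (d:ℝ) * Real.log (u k)| ≤ Real.log 2 := by
      intro k
      have h1 : u k ^ d / 2 ≤ u (k+1) := (horb' k).2.2.1
      have h2 : u (k+1) ≤ 2 * u k ^ d := (horb' k).2.2.2
      have hud : (0:ℝ) < u k ^ d := pow_pos (hupos k) d
      have hl : Real.log (u k ^ d / 2) ≤ Real.log (u (k+1)) :=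
        Real.log_le_log (div_pos hud two_pos) h1
      have hr : Real.log (u (k+1)) ≤ Real.log (2 * u k ^ d) :=
        Real.log_le_log (hupos _) h2
      rw [Real.log_div (ne_of_gt hud) (by norm_num), Real.log_pow] at hl
      rw [Real.log_mul (by norm_num) (ne_of_gt hud), Real.log_pow] at hr
      rw [abs_le]
      exact ⟨by linarith, by linarith⟩
    set p : ℝ := (d:ℝ)^n₀ with hp
    have hp0 : (0:ℝ) < p := by rw [hp]; positivity
    have hp1 : (1:ℝ) ≤ p := by rw [hp]; exact one_le_pow₀ (by linarith)
    have hlog2 : (0:ℝ) ≤ Real.log 2 := Real.log_nonneg one_le_two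
    have claim : ∀ k : ℕ, |Real.log (u k)/(d:ℝ)^(n₀+k) - Real.log (u 0)/p| ≤
        Real.log 2 * (1/p - 1/(d:ℝ)^(n₀+k)) := by
      intro k
      induction k with
      | zero => simp [hp]
      | succ k ih =>
        have hq : (0:ℝ) < (d:ℝ)^(n₀+k) := by positivity
        have hq' : (0:ℝ) < (d:ℝ)^(n₀+k+1) := by positivity
        have hstep : |Real.log (u (k+1))/(d:ℝ)^(n₀+k+1) - Real.log (u k)/(d:ℝ)^(n₀+k)| ≤
            Real.log 2 / (d:ℝ)^(n₀+k+1) := by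
          have heq : Real.log (u (k+1))/(d:ℝ)^(n₀+k+1) - Real.log (u k)/(d:ℝ)^(n₀+k)
              = (Real.log (u (k+1)) - (d:ℝ)*Real.log (u k)) / (d:ℝ)^(n₀+k+1) := by
            rw [pow_succ]
            field_simp
          rw [heq, abs_div, abs_of_pos hq']
          gcongr
          exact key k
        have htri := abs_sub_le (Real.log (u (k+1))/(d:ℝ)^(n₀+k+1))
          (Real.log (u k)/(d:ℝ)^(n₀+k)) (Real.log (u 0)/p)
        have harith : Real.log 2 / (d:ℝ)^(n₀+k+1) + Real.log 2 * (1/p - 1/(d:ℝ)^(n₀+k)) ≤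
            Real.log 2 * (1/p - 1/(d:ℝ)^(n₀+k+1)) := by
          have h2 : 2/(d:ℝ)^(n₀+k+1) ≤ 1/(d:ℝ)^(n₀+k) := by
            rw [div_le_div_iff₀ hq' hq, pow_succ]
            nlinarith
          have h3 := mul_le_mul_of_nonneg_left h2 hlog2
          have e1 : Real.log 2 * (2 / (d:ℝ) ^ (n₀ + k + 1)) = 2 * (Real.log 2 / (d:ℝ) ^ (n₀ + k + 1)) := by ring
          have e2 : Real.log 2 * (1 / (d:ℝ) ^ (n₀ + k)) = Real.log 2 / (d:ℝ) ^ (n₀ + k) := by ring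
          rw [e1, e2] at h3
          have e3 : Real.log 2 * (1/p - 1/(d:ℝ) ^ (n₀+k)) = Real.log 2/p - Real.log 2/(d:ℝ)^(n₀+k) := by ring
          have e4 : Real.log 2 * (1/p - 1/(d:ℝ) ^ (n₀+k+1)) = Real.log 2/p - Real.log 2/(d:ℝ)^(n₀+k+1) := by ring
          rw [e3, e4]
          linarith
        show |Real.log (u (k+1))/(d:ℝ)^(n₀+(k+1)) - Real.log (u 0)/p| ≤
            Real.log 2 * (1/p - 1/(d:ℝ)^(n₀+(k+1)))
        have hidx : n₀ + (k+1) = n₀ + k + 1 := by ring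
        rw [hidx]
        linarith
    have htpow : (0:ℝ) < Complex.abs t ^ D' := by positivity
    have hu0ge : c/2 * Complex.abs t ^ D' ≤ u 0 := hge
    have hu0le : u 0 ≤ pnorm P * Complex.abs t ^ D' := hle
    have hbound0 : |Real.log (u 0) - (D':ℝ) * Real.log (Complex.abs t)| ≤
        |Real.log (c/2)| + |Real.log (pnorm P)| := by
      have hlog1 : Real.log (c/2 * Complex.abs t ^ D') ≤ Real.log (u 0) :=
        Real.log_le_log (mul_pos (by positivity) htpow) hu0ge
      have hlog2' : Real.log (u 0) ≤ Real.log (pnorm P * Complex.abs t ^ D') :=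
        Real.log_le_log (lt_of_lt_of_le (by positivity) hu0ge) hu0le
      rw [Real.log_mul (by positivity) (ne_of_gt htpow), Real.log_pow] at hlog1
      rw [Real.log_mul (ne_of_gt hpn0) (ne_of_gt htpow), Real.log_pow] at hlog2'
      rw [abs_le]
      constructor
      · have h6 := neg_abs_le (Real.log (c/2))
        have h7 := abs_nonneg (Real.log (pnorm P))
        linarith
      · have h6 := le_abs_self (Real.log (pnorm P))
        have h7 := abs_nonneg (Real.log (c/2))
        linarith
    have hmLt : (m:ℝ) * Real.log (Complex.abs t) = (D':ℝ) * Real.log (Complex.abs t) / p := by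
      rw [hD', hp]
      push_cast
      field_simp
    have hev : ∀ n, n ≥ n₀ →
        |(1/(d:ℝ)^n) * Real.log (max 1 (Complex.abs ((F^[n] a).eval t))) -
          (m:ℝ)*Real.log (Complex.abs t)| ≤
        Real.log 2 + (|Real.log (c/2)| + |Real.log (pnorm P)|) := by
      intro n hn
      obtain ⟨k, rfl⟩ := Nat.exists_eq_add_of_le hn
      have hmax : max 1 (Complex.abs ((F^[n₀+k] a).eval t)) = u k :=
        max_eq_right (by linarith [hu4 k])
      rw [hmax, one_div_mul_eq_div]
      have e1 := claim k
      have e2 : |Real.log (u 0)/p - (m:ℝ)*Real.log (Complex.abs t)| ≤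
          |Real.log (c/2)| + |Real.log (pnorm P)| := by
        rw [hmLt, div_sub_div_same, abs_div, abs_of_pos hp0]
        calc |Real.log (u 0) - (D':ℝ) * Real.log (Complex.abs t)| / p
            ≤ (|Real.log (c/2)| + |Real.log (pnorm P)|) / p := by
              gcongr
          _ ≤ (|Real.log (c/2)| + |Real.log (pnorm P)|) := by
              apply div_le_self (by positivity) hp1
      have htri := abs_sub_le (Real.log (u k)/(d:ℝ)^(n₀+k)) (Real.log (u 0)/p)
        ((m:ℝ)*Real.log (Complex.abs t))
      have hq : (0:ℝ) < (d:ℝ)^(n₀+k) := by positivity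
      have hfrac : 1/p - 1/(d:ℝ)^(n₀+k) ≤ 1 := by
        have h8 : 1/p ≤ 1 := by rw [div_le_one hp0]; exact hp1
        have h9 : (0:ℝ) < 1/(d:ℝ)^(n₀+k) := by positivity
        linarith
      have h10 : Real.log 2 * (1/p - 1/(d:ℝ)^(n₀+k)) ≤ Real.log 2 * 1 :=
        mul_le_mul_of_nonneg_left hfrac hlog2
      linarith
    have htend : Tendsto (fun n : ℕ =>
        |(1/(d:ℝ)^n) * Real.log (max 1 (Complex.abs ((F^[n] a).eval t))) -
          (m:ℝ)*Real.log (Complex.abs t)|) atTop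
        (nhds (|G t - (m:ℝ)*Real.log (Complex.abs t)|)) :=
      ((hG t).sub tendsto_const_nhds).abs
    exact le_of_tendsto htend (eventually_atTop.mpr ⟨n₀, hev⟩)
  · -- PART 2
    have hMeq : {t : ℂ | ∃ B : ℝ, ∀ n : ℕ, Complex.abs ((F^[n] a).eval t) ≤ B} =
        ⋂ n : ℕ, {t : ℂ | Complex.abs ((F^[n] a).eval t) ≤ R₁ t} := by
      ext t
      simp only [Set.mem_setOf_eq, Set.mem_iInter]
      constructor
      · rintro ⟨B, hB⟩ n
        by_contra hcon
        push_neg at hcon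
        have hbase' : max 4 (2*(1 + Bt t)) ≤ Complex.abs ((F^[n] a).eval t) := le_of_lt hcon
        obtain ⟨k, hk⟩ := pow_unbounded_of_one_lt B (one_lt_two (α := ℝ))
        have h2 := (orbit_grow d hd f hmonic hdeg a t n hbase' k).2.1
        have h3 := hB (n + k)
        have h4 : (0:ℝ) < 2^k := by positivity
        linarith
      · intro h
        exact ⟨R₁ t, fun n => h n⟩
    have hclosed : IsClosed {t : ℂ | ∃ B : ℝ, ∀ n : ℕ, Complex.abs ((F^[n] a).eval t) ≤ B} := by
      rw [hMeq]
      refine isClosed_iInter fun n => isClosed_le ?_ ?_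
      · exact Complex.continuous_abs.comp (Polynomial.continuous _)
      · rw [hR₁]
        exact continuous_const.max (continuous_const.mul (continuous_const.add
          (continuous_finset_sum _ fun j _ => Complex.continuous_abs.comp (Polynomial.continuous _))))
    have hbdd : Bornology.IsBounded {t : ℂ | ∃ B : ℝ, ∀ n : ℕ, Complex.abs ((F^[n] a).eval t) ≤ B} := by
      apply Bornology.IsBounded.subset (Metric.isBounded_closedBall (x := (0:ℂ)) (r := R))
      rintro t ⟨B, hB⟩
      rw [Metric.mem_closedBall, Complex.dist_eq, sub_zero]
      by_contra hgt
      push_neg at hgt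
      have ht : R ≤ Complex.abs t := le_of_lt hgt
      obtain ⟨h1, _, h3⟩ := hbase t ht
      have hbase' : max 4 (2*(1 + Bt t)) ≤ Complex.abs ((F^[n₀] a).eval t) := le_trans h3 h1
      obtain ⟨k, hk⟩ := pow_unbounded_of_one_lt B (one_lt_two (α := ℝ))
      have h2 := (orbit_grow d hd f hmonic hdeg a t n₀ hbase' k).2.1
      have h4 := hB (n₀ + k)
      have h5 : (0:ℝ) < 2^k := by positivity
      linarith
    exact Metric.isCompact_of_isClosed_isBounded hclosed hbdd
end
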